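/- Under the product construction, the blocks ⊤(x,y) and ⊥(x,y) in G₁ × G₂ satisfy the cardinality condition: |⊤(x,y)| = |⊥(x,y)| = (u²v²−uv)/m if y ≠ 0, and |⊤(x,0)| = |⊥(x,0)| = (u²v²−uv)/m + uv. -/

import Mathlib

open scoped Classical

noncomputable section

/-- Indicator function of a finset, with values in `ℤ`. -/
def ind {α : Type*} (D : Finset α) (g : α) : ℤ := if g ∈ D then 1 else 0

/-- Character sum `ψ(D) = ∑_{x ∈ D} ψ(x)`. -/
def charSum {G : Type*} [AddCommGroup G] (ψ : AddChar G ℂ) (D : Finset G) : ℂ :=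
  ∑ g ∈ D, ψ g

/-- Condition (1): cardinalities of the building blocks. -/
def Cond1 {G : Type*} (m u : ℕ) (T B : ZMod m → ZMod m → Finset G) : Prop :=
  ∀ x y : ZMod m,
    (y ≠ 0 → ((T x y).card : ℚ) = ((u : ℚ) ^ 2 - u) / m ∧
             ((B x y).card : ℚ) = ((u : ℚ) ^ 2 - u) / m) ∧
    (y = 0 → ((T x y).card : ℚ) = ((u : ℚ) ^ 2 - u) / m + u ∧
             ((B x y).card : ℚ) = ((u : ℚ) ^ 2 - u) / m + u)

/-- Condition (2): for each family and each `x, y`, the translates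
`♯(x−z, y+z)`, `z ∈ Z_m`, partition `G`. -/
def Cond2 {G : Type*} (m : ℕ) (T B : ZMod m → ZMod m → Finset G) : Prop :=
  ∀ x y : ZMod m, ∀ g : G,
    (∃! z : ZMod m, g ∈ T (x - z) (y + z)) ∧ (∃! z : ZMod m, g ∈ B (x - z) (y + z))

/-- Condition (3): the character value condition. The boolean in the triple selects
the family (`true` for `⊤`, `false` for `⊥`). -/
def Cond3 {G : Type*} [AddCommGroup G] (m u : ℕ) (T B : ZMod m → ZMod m → Finset G) : Prop :=
  ∀ ψ : AddChar G ℂ, ψ ≠ 1 →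
    ∃! t : ZMod m × ZMod m × Bool,
      (∀ y : ZMod m, y ≠ t.2.1 → charSum ψ ((cond t.2.2 T B) t.1 y) = -(u : ℂ)) ∧
      (∀ x : ZMod m, x ≠ t.1 → charSum ψ ((cond t.2.2 T B) x t.2.1) = (u : ℂ)) ∧
      (∀ x y : ZMod m, (x = t.1 ↔ y = t.2.1) → charSum ψ ((cond t.2.2 T B) x y) = 0) ∧
      (∀ x y : ZMod m, charSum ψ ((cond (!t.2.2) T B) x y) = 0)


/-- The product building block `⊤(x,y)` in `G₁ × G₂`. -/
def prodTop {G₁ G₂ : Type*} (m : ℕ) [NeZero m]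
    (T₁ B₁ : ZMod m → ZMod m → Finset G₁) (T₂ B₂ : ZMod m → ZMod m → Finset G₂)
    (x y : ZMod m) : Finset (G₁ × G₂) :=
  Finset.univ.biUnion fun a : ZMod m => Finset.univ.biUnion fun b : ZMod m =>
    (T₁ (x - a) (y - b)) ×ˢ ((B₂ (x + y - a) a) ∩ (T₂ (x + y - b) b))

/-- The product building block `⊥(x,y)` in `G₁ × G₂`. -/
def prodBot {G₁ G₂ : Type*} (m : ℕ) [NeZero m]
    (T₁ B₁ : ZMod m → ZMod m → Finset G₁) (T₂ B₂ : ZMod m → ZMod m → Finset G₂)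
    (x y : ZMod m) : Finset (G₁ × G₂) :=
  Finset.univ.biUnion fun a : ZMod m => Finset.univ.biUnion fun b : ZMod m =>
    (B₁ (x - b) (y - a)) ×ˢ ((B₂ (x + y - a) a) ∩ (T₂ (x + y - b) b))

lemma sum_inter_card' {G : Type*} [DecidableEq G] {m : ℕ} [NeZero m] (S : ZMod m → Finset G)
    (hpart : ∀ g : G, ∃! z : ZMod m, g ∈ S z) (D : Finset G) :
    ∑ z : ZMod m, (S z ∩ D).card = D.card := by
  have h : ∀ z : ZMod m, (S z ∩ D).card = ∑ g ∈ D, (if g ∈ S z then 1 else 0) := by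
    intro z
    rw [Finset.inter_comm, ← Finset.filter_mem_eq_inter, Finset.card_filter]
  simp_rw [h]
  rw [Finset.sum_comm]
  have h2 : ∀ g ∈ D, ∑ z : ZMod m, (if g ∈ S z then 1 else 0) = 1 := by
    intro g _
    obtain ⟨z₀, hz₀, hun⟩ := hpart g
    have : ∀ z : ZMod m, (if g ∈ S z then 1 else 0) = if z = z₀ then 1 else 0 := by
      intro z
      by_cases hz : g ∈ S z
      · rw [if_pos hz, if_pos (hun z hz)]
      · have : ¬ z = z₀ := fun h => hz (h ▸ hz₀)
        simp [hz, this]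
    simp_rw [this]
    simp
  rw [Finset.sum_congr rfl h2]
  simp

lemma disj_of_unique' {G : Type*} {m : ℕ} (S : ZMod m → Finset G)
    (h : ∀ g : G, ∃! z : ZMod m, g ∈ S z) {z z' : ZMod m} (hzz : z ≠ z')
    {g : G} (hg : g ∈ S z) (hg' : g ∈ S z') : False := by
  obtain ⟨w, _, hun⟩ := h g
  exact hzz ((hun z hg).trans (hun z' hg').symm)

lemma key_sum' {G : Type*} [DecidableEq G] [Fintype G] {m : ℕ} [NeZero m]
    (P Q : ZMod m → Finset G)
    (hP : ∀ g : G, ∃! a : ZMod m, g ∈ P a) (hQ : ∀ g : G, ∃! b : ZMod m, g ∈ Q b)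
    (K w : ℚ) (y : ZMod m) :
    ∑ a : ZMod m, ∑ b : ZMod m,
        (K + if b = y then w else 0) * ((P a ∩ Q b).card : ℚ)
      = K * (Fintype.card G : ℚ) + w * ((Q y).card : ℚ) := by
  rw [Finset.sum_comm]
  have step1 : ∀ b : ZMod m,
      ∑ a : ZMod m, (K + if b = y then w else 0) * ((P a ∩ Q b).card : ℚ)
        = (K + if b = y then w else 0) * ((Q b).card : ℚ) := by
    intro b
    rw [← Finset.mul_sum]
    congr 1
    rw [← Nat.cast_sum]
    exact_mod_cast congrArg (Nat.cast : ℕ → ℚ) (sum_inter_card' P hP (Q b))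
  rw [Finset.sum_congr rfl fun b _ => step1 b]
  have hQtot : ∑ b : ZMod m, ((Q b).card : ℚ) = (Fintype.card G : ℚ) := by
    have := sum_inter_card' Q hQ (Finset.univ : Finset G)
    simp only [Finset.inter_univ] at this
    rw [← Nat.cast_sum]
    exact_mod_cast congrArg (Nat.cast : ℕ → ℚ) this
  simp_rw [add_mul, Finset.sum_add_distrib, ← Finset.mul_sum, hQtot, ite_mul, zero_mul]
  rw [Finset.sum_ite_eq' Finset.univ y (fun b => w * ((Q b).card : ℚ))]
  simp

lemma card_biUnion_prod' {G₁ G₂ : Type*} [DecidableEq G₁] [DecidableEq G₂] {m : ℕ} [NeZero m]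
    (f : ZMod m → ZMod m → Finset G₁) (P Q : ZMod m → Finset G₂)
    (hP : ∀ g : G₂, ∃! a : ZMod m, g ∈ P a) (hQ : ∀ g : G₂, ∃! b : ZMod m, g ∈ Q b) :
    ((Finset.univ.biUnion fun a : ZMod m => Finset.univ.biUnion fun b : ZMod m =>
        (f a b) ×ˢ (P a ∩ Q b)).card)
      = ∑ a : ZMod m, ∑ b : ZMod m, (f a b).card * (P a ∩ Q b).card := by
  rw [Finset.card_biUnion]
  · refine Finset.sum_congr rfl fun a _ => ?_
    rw [Finset.card_biUnion]
    · exact Finset.sum_congr rfl fun b _ => Finset.card_product _ _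
    · intro b _ b' _ hbb
      rw [Function.onFun, Finset.disjoint_left]
      rintro ⟨g₁, g₂⟩ h h'
      simp only [Finset.mem_product, Finset.mem_inter] at h h'
      exact disj_of_unique' Q hQ hbb h.2.2 h'.2.2
  · intro a _ a' _ haa
    rw [Function.onFun, Finset.disjoint_left]
    rintro ⟨g₁, g₂⟩ h h'
    simp only [Finset.mem_biUnion, Finset.mem_product, Finset.mem_inter, Finset.mem_univ,
      true_and] at h h'
    obtain ⟨b, hb⟩ := h
    obtain ⟨b', hb'⟩ := h'
    exact disj_of_unique' P hP haa hb.2.1 hb'.2.1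

theorem stmt_13 {G₁ G₂ : Type*} [AddCommGroup G₁] [Fintype G₁] [AddCommGroup G₂] [Fintype G₂]
    (m u v : ℕ) [NeZero m]
    (hu : Fintype.card G₁ = u ^ 2) (hv : Fintype.card G₂ = v ^ 2)
    (T₁ B₁ : ZMod m → ZMod m → Finset G₁) (T₂ B₂ : ZMod m → ZMod m → Finset G₂)
    (h11 : Cond1 m u T₁ B₁) (h21 : Cond2 m T₁ B₁) (h31 : Cond3 m u T₁ B₁)
    (h12 : Cond1 m v T₂ B₂) (h22 : Cond2 m T₂ B₂) (h32 : Cond3 m v T₂ B₂) :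
    ∀ x y : ZMod m,
      (y ≠ 0 →
        ((prodTop m T₁ B₁ T₂ B₂ x y).card : ℚ) = ((u : ℚ) ^ 2 * v ^ 2 - u * v) / m ∧
        ((prodBot m T₁ B₁ T₂ B₂ x y).card : ℚ) = ((u : ℚ) ^ 2 * v ^ 2 - u * v) / m) ∧
      (y = 0 →
        ((prodTop m T₁ B₁ T₂ B₂ x y).card : ℚ) = ((u : ℚ) ^ 2 * v ^ 2 - u * v) / m + u * v ∧
        ((prodBot m T₁ B₁ T₂ B₂ x y).card : ℚ) = ((u : ℚ) ^ 2 * v ^ 2 - u * v) / m + u * v) := by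
  intro x y
  classical
  have hm : (m : ℚ) ≠ 0 := Nat.cast_ne_zero.mpr (NeZero.ne m)
  have hB2 : ∀ g : G₂, ∃! a : ZMod m, g ∈ B₂ (x + y - a) a := by
    intro g; simpa using (h22 (x + y) 0 g).2
  have hT2 : ∀ g : G₂, ∃! b : ZMod m, g ∈ T₂ (x + y - b) b := by
    intro g; simpa using (h22 (x + y) 0 g).1
  set K : ℚ := ((u : ℚ) ^ 2 - u) / m with hK
  have hc1 : ∀ a b : ZMod m,
      ((T₁ (x - a) (y - b)).card : ℚ) = K + (if b = y then (u : ℚ) else 0) := by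
    intro a b
    by_cases hb : b = y
    · have hyb : y - b = 0 := by rw [hb, sub_self]
      rw [((h11 (x - a) (y - b)).2 hyb).1, if_pos hb, hK]
    · have hyb : y - b ≠ 0 := fun h => hb (sub_eq_zero.mp h).symm
      rw [((h11 (x - a) (y - b)).1 hyb).1, if_neg hb, add_zero, hK]
  have hc1' : ∀ a b : ZMod m,
      ((B₁ (x - b) (y - a)).card : ℚ) = K + (if a = y then (u : ℚ) else 0) := by
    intro a b
    by_cases ha : a = y
    · have hya : y - a = 0 := by rw [ha, sub_self]
      rw [((h11 (x - b) (y - a)).2 hya).2, if_pos ha, hK]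
    · have hya : y - a ≠ 0 := fun h => ha (sub_eq_zero.mp h).symm
      rw [((h11 (x - b) (y - a)).1 hya).2, if_neg ha, add_zero, hK]
  have topcard : ((prodTop m T₁ B₁ T₂ B₂ x y).card : ℚ)
      = K * (v : ℚ) ^ 2 + u * ((T₂ x y).card : ℚ) := by
    unfold prodTop
    rw [card_biUnion_prod' (fun a b => T₁ (x - a) (y - b)) (fun a => B₂ (x + y - a) a)
      (fun b => T₂ (x + y - b) b) hB2 hT2]
    push_cast
    rw [Finset.sum_congr rfl fun a _ => Finset.sum_congr rfl fun b _ => by rw [hc1 a b]]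
    rw [key_sum' (fun a => B₂ (x + y - a) a) (fun b => T₂ (x + y - b) b) hB2 hT2 K u y]
    rw [hv]
    push_cast
    rw [add_sub_cancel_right]
  have botcard : ((prodBot m T₁ B₁ T₂ B₂ x y).card : ℚ)
      = K * (v : ℚ) ^ 2 + u * ((B₂ x y).card : ℚ) := by
    unfold prodBot
    rw [card_biUnion_prod' (fun a b => B₁ (x - b) (y - a)) (fun a => B₂ (x + y - a) a)
      (fun b => T₂ (x + y - b) b) hB2 hT2]
    push_cast
    rw [Finset.sum_congr rfl fun a _ => Finset.sum_congr rfl fun b _ => by rw [hc1' a b]]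
    rw [Finset.sum_comm]
    rw [Finset.sum_congr rfl fun b _ => Finset.sum_congr rfl fun a _ => by
      rw [Finset.inter_comm]]
    rw [key_sum' (fun b => T₂ (x + y - b) b) (fun a => B₂ (x + y - a) a) hT2 hB2 K u y]
    rw [hv]
    push_cast
    rw [add_sub_cancel_right]
  constructor
  · intro hy
    obtain ⟨ht, hb⟩ := (h12 x y).1 hy
    constructor
    · rw [topcard, ht, hK]; field_simp; ring
    · rw [botcard, hb, hK]; field_simp; ring
  · intro hy
    obtain ⟨ht, hb⟩ := (h12 x y).2 hy
    constructor
    · rw [topcard, ht, hK]; field_simp; ring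
    · rw [botcard, hb, hK]; field_simp; ring
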